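/- For all x > 0 and y > 0 there exists a unique B > 0 with φ←(B) + xy·φ←(B/(xy)) = φ←(x) + x·φ←(y). Moreover, if x > 1 and y > 1 (two overtaking backward shocks), then this B satisfies 1 < B < xy; that is, the interaction of two backward shocks always produces an outgoing backward shock and an outgoing forward rarefaction. -/

import Mathlib

open Real Set Filter Topology

/-- κ = √γ / α with α = (γ-1)/2. -/
noncomputable def kappa (γ : ℝ) : ℝ := Real.sqrt γ / ((γ - 1) / 2)

/-- The shock branch x ↦ √((1 - x^{-1/α})(x^{γ/α} - 1)), α = (γ-1)/2. -/
noncomputable def shockPart (γ : ℝ) (x : ℝ) : ℝ :=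
  Real.sqrt ((1 - x ^ (-(1 : ℝ) / ((γ - 1) / 2))) * (x ^ (γ / ((γ - 1) / 2)) - 1))

/-- Backward auxiliary function φ← : rarefaction branch κ(x-1) for x ≤ 1,
    shock branch for x ≥ 1 (they agree, with value 0, at x = 1). -/
noncomputable def phiB (γ : ℝ) (x : ℝ) : ℝ :=
  if x ≤ 1 then kappa γ * (x - 1) else shockPart γ x

/-- Forward auxiliary function φ→ : shock branch -√(...) for x ≤ 1,
    rarefaction branch κ(x-1) for x ≥ 1 (they agree, with value 0, at x = 1). -/
noncomputable def phiF (γ : ℝ) (x : ℝ) : ℝ :=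
  if x < 1 then -shockPart γ x else kappa γ * (x - 1)


namespace OvertakeAux

private lemma hd_linear (c s : ℝ) : HasDerivAt (fun t : ℝ => c * t) c s := by
  simpa using (hasDerivAt_id s).const_mul c

/-- L1: `sinh (m t) ≥ m sinh t` for `m ≥ 1`, `t ≥ 0`. -/
lemma sinh_mul_le {m t : ℝ} (hm : 1 ≤ m) (ht : 0 ≤ t) :
    m * Real.sinh t ≤ Real.sinh (m * t) := by
  have hder : ∀ s : ℝ, HasDerivAt (fun t => Real.sinh (m * t) - m * Real.sinh t)
      (Real.cosh (m * s) * m - m * Real.cosh s) s := fun s =>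
    ((hd_linear m s).sinh).sub ((Real.hasDerivAt_sinh s).const_mul m)
  have key : MonotoneOn (fun t => Real.sinh (m * t) - m * Real.sinh t) (Set.Ici (0:ℝ)) := by
    apply monotoneOn_of_deriv_nonneg (convex_Ici 0)
    · exact ((Real.continuous_sinh.comp (continuous_const.mul continuous_id)).sub
        (continuous_const.mul Real.continuous_sinh)).continuousOn
    · intro s _; exact ((hder s).differentiableAt).differentiableWithinAt
    · intro s hs
      rw [interior_Ici, Set.mem_Ioi] at hs
      rw [(hder s).deriv]
      have h0 : Real.cosh s ≤ Real.cosh (m * s) := by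
        rw [Real.cosh_le_cosh, abs_of_nonneg (le_of_lt hs),
          abs_of_nonneg (by nlinarith [le_of_lt hs] : (0:ℝ) ≤ m * s)]
        nlinarith [le_of_lt hs]
      nlinarith
  have h := key (Set.self_mem_Ici) (Set.mem_Ici.2 ht) ht
  simp only [mul_zero, Real.sinh_zero, sub_zero, sub_self] at h
  linarith

/-- L2: `cosh (m t) - 1 ≥ m² (cosh t - 1)` for `m ≥ 1`, `t ≥ 0`. -/
lemma cosh_sub_one {m t : ℝ} (hm : 1 ≤ m) (ht : 0 ≤ t) :
    m ^ 2 * (Real.cosh t - 1) ≤ Real.cosh (m * t) - 1 := by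
  have h1 := sinh_mul_le hm (by linarith : (0:ℝ) ≤ t / 2)
  have hs : 0 ≤ Real.sinh (t / 2) := by
    have := Real.sinh_lt_sinh (x := 0) (y := t / 2)
    rcases eq_or_lt_of_le (by linarith : (0:ℝ) ≤ t/2) with h | h
    · simp [← h]
    · have := Real.sinh_lt_sinh.2 h; simp only [Real.sinh_zero] at this; linarith
  have e1 : Real.cosh t = 2 * Real.sinh (t / 2) ^ 2 + 1 := by
    have b1 := Real.cosh_two_mul (t / 2)
    have b2 := Real.cosh_sq (t / 2)
    rw [show 2 * (t / 2) = t by ring] at b1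
    linarith
  have e2 : Real.cosh (m * t) = 2 * Real.sinh (m * (t / 2)) ^ 2 + 1 := by
    have b1 := Real.cosh_two_mul (m * (t / 2))
    have b2 := Real.cosh_sq (m * (t / 2))
    rw [show 2 * (m * (t / 2)) = m * t by ring] at b1
    linarith
  rw [e1, e2]
  have hms : 0 ≤ m * Real.sinh (t / 2) := mul_nonneg (by linarith) hs
  have h2 := pow_le_pow_left₀ hms h1 2
  nlinarith [h2]

/-- L3: key inequality `γ sinh²(αv) ≤ α² sinh v sinh (γ v)`. -/
lemma key_sinh {γ : ℝ} (hγ : 1 < γ) {v : ℝ} (hv : 0 ≤ v) :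
    γ * Real.sinh ((γ - 1) / 2 * v) ^ 2 ≤ ((γ - 1) / 2) ^ 2 * (Real.sinh v * Real.sinh (γ * v)) := by
  have hm : 1 ≤ (γ + 1) / (γ - 1) := by
    rw [le_div_iff₀ (by linarith)]; linarith
  have ht : 0 ≤ (γ - 1) * v := by nlinarith
  have h2 := cosh_sub_one hm ht
  have hne : γ - 1 ≠ 0 := by linarith
  rw [show (γ + 1) / (γ - 1) * ((γ - 1) * v) = (γ + 1) * v by field_simp] at h2
  have i1 : Real.sinh v * Real.sinh (γ * v)
      = (Real.cosh ((γ + 1) * v) - Real.cosh ((γ - 1) * v)) / 2 := by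
    have a1 := Real.cosh_add (γ * v) v
    have a2 := Real.cosh_sub (γ * v) v
    rw [show γ * v + v = (γ + 1) * v by ring] at a1
    rw [show γ * v - v = (γ - 1) * v by ring] at a2
    linear_combination (a2 - a1) / 2
  have i2 : Real.sinh ((γ - 1) / 2 * v) ^ 2 = (Real.cosh ((γ - 1) * v) - 1) / 2 := by
    have b1 := Real.cosh_two_mul ((γ - 1) / 2 * v)
    have b2 := Real.cosh_sq ((γ - 1) / 2 * v)
    rw [show 2 * ((γ - 1) / 2 * v) = (γ - 1) * v by ring] at b1
    linarith
  rw [i1, i2]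
  have hC : 1 ≤ Real.cosh ((γ - 1) * v) := Real.one_le_cosh _
  have hα2 : (0:ℝ) ≤ ((γ - 1) / 2) ^ 2 := sq_nonneg _
  have h3 := mul_le_mul_of_nonneg_left h2 hα2
  have hm2 : ((γ - 1) / 2) ^ 2 * (((γ + 1) / (γ - 1)) ^ 2 * (Real.cosh ((γ - 1) * v) - 1))
      = ((γ + 1) / 2) ^ 2 * (Real.cosh ((γ - 1) * v) - 1) := by
    field_simp
  rw [hm2] at h3
  nlinarith [h3, hC]

/-- L4: `sinh (γ s) < γ sinh s · e^{(γ+1)s}` for `s > 0`. -/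
lemma sinh_exp_bound {γ : ℝ} (hγ : 1 < γ) {s : ℝ} (hs : 0 < s) :
    Real.sinh (γ * s) < γ * Real.sinh s * Real.exp ((γ + 1) * s) := by
  have ha : 0 < Real.exp (γ * s) := Real.exp_pos _
  have hb : 0 < Real.exp s := Real.exp_pos _
  have e1 : Real.exp (γ * s) * Real.exp (-(γ * s)) = 1 := by
    rw [← Real.exp_add]; simp
  have e2 : Real.exp s * Real.exp (-s) = 1 := by
    rw [← Real.exp_add]; simp
  have e3 : Real.exp ((γ + 1) * s) = Real.exp (γ * s) * Real.exp s := by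
    rw [← Real.exp_add]; ring_nf
  -- key fact 1 : exp(γs)^2 * (1 - 2γs) < 1
  have h1 : Real.exp (γ * s) ^ 2 * (1 - 2 * γ * s) < 1 := by
    rcases le_or_gt (1 - 2 * γ * s) 0 with h | h
    · nlinarith [sq_nonneg (Real.exp (γ * s))]
    · have hlt : -(2 * γ * s) + 1 < Real.exp (-(2 * γ * s)) :=
        Real.add_one_lt_exp (by nlinarith)
      have hi : Real.exp (2 * γ * s) * Real.exp (-(2 * γ * s)) = 1 := by
        rw [← Real.exp_add]; simp
      have hsq : Real.exp (2 * γ * s) = Real.exp (γ * s) ^ 2 := by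
        rw [sq, ← Real.exp_add]; ring_nf
      rw [hsq] at hi
      nlinarith [hlt, hi, sq_nonneg (Real.exp (γ * s)), ha]
  -- key fact 2 : 1 + 2s ≤ exp(s)^2
  have h2 : 1 + 2 * s ≤ Real.exp s ^ 2 := by
    have := Real.add_one_le_exp (2 * s)
    have hsq : Real.exp (2 * s) = Real.exp s ^ 2 := by rw [sq, ← Real.exp_add]; ring_nf
    rw [hsq] at this; linarith
  rw [Real.sinh_eq, Real.sinh_eq, e3]
  -- goal: (a - a')/2 < γ * ((b - b')/2) * (a * b)
  have step1 : (Real.exp (γ * s) - Real.exp (-(γ * s))) * Real.exp (γ * s)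
      < 2 * γ * s * Real.exp (γ * s) ^ 2 := by nlinarith [h1, e1]
  have step2 : Real.exp (γ * s) - Real.exp (-(γ * s)) < 2 * γ * s * Real.exp (γ * s) := by
    have := (mul_lt_mul_iff_of_pos_right ha).1 (by nlinarith [step1] :
      (Real.exp (γ * s) - Real.exp (-(γ * s))) * Real.exp (γ * s)
        < (2 * γ * s * Real.exp (γ * s)) * Real.exp (γ * s))
    exact this
  have step3 : 2 * γ * s * Real.exp (γ * s)
      ≤ γ * ((Real.exp s - Real.exp (-s)) / 2) * (Real.exp (γ * s) * Real.exp s) * 2 := by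
    have hγa : 0 < γ * Real.exp (γ * s) := by positivity
    nlinarith [h2, e2, hγa]
  linarith [step2, step3]

/-- L5: strict core inequality `γ² sinh²s + sinh²(γs) < 2γ sinh s sinh(γs) cosh((γ+1)s)`. -/
lemma core_strict {γ : ℝ} (hγ : 1 < γ) {s : ℝ} (hs : 0 < s) :
    γ ^ 2 * Real.sinh s ^ 2 + Real.sinh (γ * s) ^ 2
      < 2 * γ * Real.sinh s * Real.sinh (γ * s) * Real.cosh ((γ + 1) * s) := by
  have hsh : 0 < Real.sinh s := by
    have := Real.sinh_lt_sinh.2 hs; simpa using this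
  have hc : 0 < γ * Real.sinh s := by positivity
  have hB : γ * Real.sinh s ≤ Real.sinh (γ * s) := sinh_mul_le hγ.le hs.le
  have hBE : Real.sinh (γ * s) < γ * Real.sinh s * Real.exp ((γ + 1) * s) :=
    sinh_exp_bound hγ hs
  have hE1 : 1 < Real.exp ((γ + 1) * s) := by
    have := Real.add_one_lt_exp (show (γ + 1) * s ≠ 0 by positivity)
    nlinarith
  have hEinv : Real.exp ((γ + 1) * s) * Real.exp (-((γ + 1) * s)) = 1 := by
    rw [← Real.exp_add]; simp
  rw [Real.cosh_eq, Real.exp_neg]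
  have hBpos : 0 < Real.sinh (γ * s) := lt_of_lt_of_le hc hB
  have hprod : 0 < (γ * Real.sinh s * Real.exp ((γ + 1) * s) - Real.sinh (γ * s))
      * (Real.sinh (γ * s) * Real.exp ((γ + 1) * s) - γ * Real.sinh s) := by
    apply mul_pos (by linarith)
    nlinarith [hB, hE1, hBpos]
  have hEpos : 0 < Real.exp ((γ + 1) * s) := Real.exp_pos _
  have expand : 2 * γ * Real.sinh s * Real.sinh (γ * s)
        * ((Real.exp ((γ + 1) * s) + (Real.exp ((γ + 1) * s))⁻¹) / 2) * Real.exp ((γ + 1) * s)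
      = γ * Real.sinh s * Real.sinh (γ * s) * Real.exp ((γ + 1) * s) ^ 2
        + γ * Real.sinh s * Real.sinh (γ * s) := by
    field_simp
  have hgoal : (γ ^ 2 * Real.sinh s ^ 2 + Real.sinh (γ * s) ^ 2) * Real.exp ((γ + 1) * s)
      < 2 * γ * Real.sinh s * Real.sinh (γ * s)
        * ((Real.exp ((γ + 1) * s) + (Real.exp ((γ + 1) * s))⁻¹) / 2) * Real.exp ((γ + 1) * s) := by
    rw [expand]
    nlinarith [hprod]
  exact (mul_lt_mul_iff_of_pos_right hEpos).1 hgoal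

noncomputable def Pf (γ s : ℝ) : ℝ := Real.sinh s * Real.sinh (γ * s)
noncomputable def Pd (γ s : ℝ) : ℝ :=
  Real.cosh s * Real.sinh (γ * s) + γ * (Real.sinh s * Real.cosh (γ * s))
noncomputable def Pdd (γ s : ℝ) : ℝ :=
  (1 + γ ^ 2) * Pf γ s + 2 * γ * (Real.cosh s * Real.cosh (γ * s))
noncomputable def Qf (γ s : ℝ) : ℝ := Real.sqrt (Pf γ s)
noncomputable def Qd (γ s : ℝ) : ℝ := Pd γ s / (2 * Qf γ s)
noncomputable def Wf (γ s : ℝ) : ℝ :=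
  Real.exp (-((γ - 1) / 2 * s)) * ((γ - 1) / 2 * Qf γ s + Qd γ s)
noncomputable def Phif (γ a : ℝ) : ℝ := 2 * Real.exp ((γ - 1) / 2 * a) * Qf γ a

lemma sinh_pos' {s : ℝ} (hs : 0 < s) : 0 < Real.sinh s := by
  have := Real.sinh_lt_sinh.2 hs; simpa using this

lemma Pf_pos {γ : ℝ} (hγ : 1 < γ) {s : ℝ} (hs : 0 < s) : 0 < Pf γ s :=
  mul_pos (sinh_pos' hs) (sinh_pos' (by nlinarith))

lemma Qf_pos {γ : ℝ} (hγ : 1 < γ) {s : ℝ} (hs : 0 < s) : 0 < Qf γ s :=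
  Real.sqrt_pos.2 (Pf_pos hγ hs)

lemma Qf_cont (γ : ℝ) : Continuous (Qf γ) :=
  Real.continuous_sqrt.comp
    (Real.continuous_sinh.mul (Real.continuous_sinh.comp (continuous_const.mul continuous_id)))

lemma Phif_cont (γ : ℝ) : Continuous (Phif γ) :=
  ((continuous_const.mul (Real.continuous_exp.comp (continuous_const.mul continuous_id))).mul
    (Qf_cont γ))

lemma hasDerivAt_Pf (γ s : ℝ) : HasDerivAt (Pf γ) (Pd γ s) s := by
  have h := (Real.hasDerivAt_sinh s).mul ((hd_linear γ s).sinh)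
  refine h.congr_deriv (Eq.symm ?_)
  unfold Pd; ring

lemma hasDerivAt_Pd (γ s : ℝ) : HasDerivAt (Pd γ) (Pdd γ s) s := by
  have h := ((Real.hasDerivAt_cosh s).mul ((hd_linear γ s).sinh)).add
    (((Real.hasDerivAt_sinh s).mul ((hd_linear γ s).cosh)).const_mul γ)
  refine h.congr_deriv (Eq.symm ?_)
  unfold Pdd Pf; ring

lemma hasDerivAt_Qf {γ : ℝ} (hγ : 1 < γ) {s : ℝ} (hs : 0 < s) :
    HasDerivAt (Qf γ) (Qd γ s) s := by
  have hP := Pf_pos hγ hs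
  have h := (Real.hasDerivAt_sqrt hP.ne').comp s (hasDerivAt_Pf γ s)
  refine h.congr_deriv (Eq.symm ?_)
  unfold Qd Qf
  field_simp

lemma hasDerivAt_Qd {γ : ℝ} (hγ : 1 < γ) {s : ℝ} (hs : 0 < s) :
    HasDerivAt (Qd γ)
      ((2 * Pdd γ s * Pf γ s - Pd γ s ^ 2) / (4 * Pf γ s * Qf γ s)) s := by
  have hP := Pf_pos hγ hs
  have hQ := Qf_pos hγ hs
  have hq2 : Qf γ s ^ 2 = Pf γ s := Real.sq_sqrt hP.le
  have h := (hasDerivAt_Pd γ s).div ((hasDerivAt_Qf hγ hs).const_mul 2)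
    (by positivity : 2 * Qf γ s ≠ 0)
  refine h.congr_deriv (Eq.symm ?_)
  unfold Qd
  rw [← hq2]
  field_simp
  ring

lemma hasDerivAt_Wf {γ : ℝ} (hγ : 1 < γ) {s : ℝ} (hs : 0 < s) :
    HasDerivAt (Wf γ)
      (Real.exp (-((γ - 1) / 2 * s)) *
        ((2 * Pdd γ s * Pf γ s - Pd γ s ^ 2) / (4 * Pf γ s * Qf γ s)
          - ((γ - 1) / 2) ^ 2 * Qf γ s)) s := by
  have h1 : HasDerivAt (fun t : ℝ => Real.exp (-((γ - 1) / 2 * t)))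
      (Real.exp (-((γ - 1) / 2 * s)) * (-((γ - 1) / 2))) s := ((hd_linear ((γ - 1) / 2) s).neg).exp
  have h2 := ((hasDerivAt_Qf hγ hs).const_mul ((γ - 1) / 2)).add (hasDerivAt_Qd hγ hs)
  have h := h1.mul h2
  refine h.congr_deriv (Eq.symm ?_)
  simp only [Pi.add_apply]
  unfold Qd
  ring

lemma hasDerivAt_Phif {γ : ℝ} (hγ : 1 < γ) {s : ℝ} (hs : 0 < s) :
    HasDerivAt (Phif γ) (2 * Real.exp ((γ - 1) * s) * Wf γ s) s := by
  have h1 : HasDerivAt (fun t : ℝ => 2 * Real.exp ((γ - 1) / 2 * t))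
      (Real.exp ((γ - 1) / 2 * s) * ((γ - 1) / 2) * 2) s := by
    have := ((hd_linear ((γ - 1) / 2) s).exp).const_mul 2
    refine this.congr_deriv (Eq.symm ?_); ring
  have h := h1.mul (hasDerivAt_Qf hγ hs)
  refine h.congr_deriv (Eq.symm ?_)
  unfold Wf
  have eE : Real.exp ((γ - 1) * s) * Real.exp (-((γ - 1) / 2 * s)) = Real.exp ((γ - 1) / 2 * s) := by
    rw [← Real.exp_add]; ring_nf
  linear_combination (2 * ((γ - 1) / 2 * Qf γ s + Qd γ s)) * eE

/-- The central positivity fact `2 P'' P - P'² - (γ-1)² P² > 0`. -/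
lemma key_pos {γ : ℝ} (hγ : 1 < γ) {s : ℝ} (hs : 0 < s) :
    (γ - 1) ^ 2 * Pf γ s ^ 2 + Pd γ s ^ 2 < 2 * Pdd γ s * Pf γ s := by
  have h5 := core_strict hγ hs
  have c1 := Real.cosh_sq s
  have c2 := Real.cosh_sq (γ * s)
  have c3 : Real.cosh ((γ + 1) * s)
      = Real.cosh s * Real.cosh (γ * s) + Real.sinh s * Real.sinh (γ * s) := by
    rw [show (γ + 1) * s = s + γ * s by ring, Real.cosh_add]
  rw [c3] at h5
  have key_id : 2 * Pdd γ s * Pf γ s - Pd γ s ^ 2 - (γ - 1) ^ 2 * Pf γ s ^ 2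
      = 2 * γ * Real.sinh s * Real.sinh (γ * s)
          * (Real.cosh s * Real.cosh (γ * s) + Real.sinh s * Real.sinh (γ * s))
        - γ ^ 2 * Real.sinh s ^ 2 - Real.sinh (γ * s) ^ 2 := by
    unfold Pdd Pd Pf
    linear_combination (-(Real.sinh (γ * s) ^ 2)) * c1 + (-(γ ^ 2 * Real.sinh s ^ 2)) * c2
  linarith [h5, key_id]

lemma Wf_mono {γ : ℝ} (hγ : 1 < γ) : StrictMonoOn (Wf γ) (Set.Ioi 0) := by
  apply strictMonoOn_of_deriv_pos (convex_Ioi 0)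
  · intro s hs
    exact (hasDerivAt_Wf hγ hs).continuousAt.continuousWithinAt
  · intro s hs
    rw [interior_Ioi] at hs
    rw [(hasDerivAt_Wf hγ hs).deriv]
    have hP := Pf_pos hγ hs
    have hQ := Qf_pos hγ hs
    have hk := key_pos hγ hs
    have hnum : 0 < 2 * Pdd γ s * Pf γ s - Pd γ s ^ 2 - (γ - 1) ^ 2 * Pf γ s ^ 2 := by linarith
    have hq2 : Qf γ s ^ 2 = Pf γ s := Real.sq_sqrt hP.le
    apply mul_pos (Real.exp_pos _)
    rw [sub_pos, lt_div_iff₀ (by positivity)]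
    have e : ((γ - 1) / 2) ^ 2 * Qf γ s * (4 * Pf γ s * Qf γ s) = (γ - 1) ^ 2 * Pf γ s ^ 2 := by
      linear_combination ((γ - 1) ^ 2 * Pf γ s) * hq2
    linarith [e, hnum]

/-- Superadditivity of `Phif`. -/
lemma superadd {γ : ℝ} (hγ : 1 < γ) {a b : ℝ} (ha : 0 < a) (hb : 0 < b) :
    Phif γ a + Real.exp ((γ - 1) * a) * Phif γ b < Phif γ (a + b) := by
  have hD : StrictMonoOn
      (fun t => Phif γ (a + t) - Phif γ a - Real.exp ((γ - 1) * a) * Phif γ t)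
      (Set.Ici (0:ℝ)) := by
    apply strictMonoOn_of_deriv_pos (convex_Ici 0)
    · exact (((Phif_cont γ).comp (continuous_const.add continuous_id)).sub
        continuous_const).sub (continuous_const.mul (Phif_cont γ)) |>.continuousOn
    · intro t ht
      rw [interior_Ici] at ht
      have hat : 0 < a + t := by
        have : (0:ℝ) < t := ht
        linarith
      have hinner : HasDerivAt (fun t : ℝ => a + t) 1 t := by
        simpa using (hasDerivAt_id t).const_add a
      have h1 : HasDerivAt (fun t => Phif γ (a + t))
          (2 * Real.exp ((γ - 1) * (a + t)) * Wf γ (a + t)) t := by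
        have := (hasDerivAt_Phif hγ hat).comp t hinner
        exact this.congr_deriv (mul_one _)
      have hD1 : HasDerivAt
          (fun t => Phif γ (a + t) - Phif γ a - Real.exp ((γ - 1) * a) * Phif γ t)
          (2 * Real.exp ((γ - 1) * (a + t)) * Wf γ (a + t)
            - Real.exp ((γ - 1) * a) * (2 * Real.exp ((γ - 1) * t) * Wf γ t)) t :=
        (h1.sub_const _).sub ((hasDerivAt_Phif hγ (by exact ht)).const_mul _)
      rw [hD1.deriv]
      have hW : Wf γ t < Wf γ (a + t) :=
        Wf_mono hγ (Set.mem_Ioi.2 ht) (Set.mem_Ioi.2 hat) (by linarith)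
      have eE : Real.exp ((γ - 1) * a) * Real.exp ((γ - 1) * t) = Real.exp ((γ - 1) * (a + t)) := by
        rw [← Real.exp_add]; ring_nf
      have hEp : 0 < Real.exp ((γ - 1) * (a + t)) := Real.exp_pos _
      have e2 : Real.exp ((γ - 1) * a) * (2 * Real.exp ((γ - 1) * t) * Wf γ t)
          = 2 * Real.exp ((γ - 1) * (a + t)) * Wf γ t := by rw [← eE]; ring
      rw [e2]
      nlinarith [mul_pos hEp (sub_pos.2 hW)]
  have h0 : Phif γ 0 = 0 := by
    unfold Phif Qf Pf
    simp
  have h := hD Set.self_mem_Ici (Set.mem_Ici.2 hb.le) hb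
  simp only [add_zero, mul_zero, h0, sub_zero, sub_self, zero_sub] at h
  -- h : Phif γ a - Phif γ a - exp.. * Phif 0 < ...
  have h' : 0 < Phif γ (a + b) - Phif γ a - Real.exp ((γ - 1) * a) * Phif γ b := by
    simpa using h
  linarith

/-- Transfer: `shockPart γ (e^{(γ-1)a}) = Phif γ a` for `a ≥ 0`. -/
lemma shockPart_eq_Phif {γ : ℝ} (hγ : 1 < γ) {a : ℝ} (ha : 0 ≤ a) :
    shockPart γ (Real.exp ((γ - 1) * a)) = Phif γ a := by
  have hne : γ - 1 ≠ 0 := by linarith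
  have hx : (0:ℝ) < Real.exp ((γ - 1) * a) := Real.exp_pos _
  have r1 : Real.exp ((γ - 1) * a) ^ (-(1:ℝ) / ((γ - 1) / 2)) = Real.exp (-(2 * a)) := by
    rw [Real.rpow_def_of_pos hx, Real.log_exp]
    congr 1
    field_simp
  have r2 : Real.exp ((γ - 1) * a) ^ (γ / ((γ - 1) / 2)) = Real.exp (2 * γ * a) := by
    rw [Real.rpow_def_of_pos hx, Real.log_exp]
    congr 1
    field_simp
  unfold shockPart
  rw [r1, r2]
  have hid : (1 - Real.exp (-(2 * a))) * (Real.exp (2 * γ * a) - 1)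
      = (2 * Real.exp ((γ - 1) / 2 * a)) ^ 2 * Pf γ a := by
    unfold Pf
    rw [Real.sinh_eq, Real.sinh_eq]
    have h3 : Real.exp ((γ - 1) / 2 * a) * Real.exp ((γ - 1) / 2 * a)
        = Real.exp (γ * a) * Real.exp (-a) := by
      rw [← Real.exp_add, ← Real.exp_add]; ring_nf
    have h4 : Real.exp (-a) * Real.exp a = 1 := by rw [← Real.exp_add]; simp
    have h5 : Real.exp (-(γ * a)) * Real.exp (γ * a) = 1 := by rw [← Real.exp_add]; simp
    have h6 : Real.exp (-(2 * a)) = Real.exp (-a) * Real.exp (-a) := by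
      rw [← Real.exp_add]; ring_nf
    have h7 : Real.exp (2 * γ * a) = Real.exp (γ * a) * Real.exp (γ * a) := by
      rw [← Real.exp_add]; ring_nf
    rw [h6, h7]
    linear_combination
      (-(Real.exp a - Real.exp (-a)) * (Real.exp (γ * a) - Real.exp (-(γ * a)))) * h3
      + (-Real.exp (γ * a) * Real.exp (γ * a) + Real.exp (-(γ * a)) * Real.exp (γ * a)) * h4
      + (1 - Real.exp (-a) * Real.exp (-a)) * h5
  rw [hid, Real.sqrt_mul (by positivity) (Pf γ a), Real.sqrt_sq (by positivity)]
  rfl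

lemma kappa_pos_aux {γ : ℝ} (hγ : 1 < γ) : 0 < kappa γ :=
  div_pos (Real.sqrt_pos.2 (by linarith)) (by linarith)

/-- Key inequality: `κ (x-1) ≤ shockPart γ x` for `x ≥ 1`. -/
lemma kappa_le_shock {γ : ℝ} (hγ : 1 < γ) {x : ℝ} (hx : 1 ≤ x) :
    kappa γ * (x - 1) ≤ shockPart γ x := by
  have hγ1 : (0:ℝ) < γ - 1 := by linarith
  have hx0 : (0:ℝ) < x := by linarith
  set a := Real.log x / (γ - 1) with hadef
  have ha0 : 0 ≤ a := div_nonneg (Real.log_nonneg hx) hγ1.le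
  have hxa : x = Real.exp ((γ - 1) * a) := by
    rw [hadef, mul_div_cancel₀ _ hγ1.ne', Real.exp_log hx0]
  rw [hxa, shockPart_eq_Phif hγ ha0]
  have h1 : Real.exp ((γ - 1) * a) - 1
      = 2 * Real.exp ((γ - 1) / 2 * a) * Real.sinh ((γ - 1) / 2 * a) := by
    rw [Real.sinh_eq]
    have e : Real.exp ((γ - 1) / 2 * a) * Real.exp ((γ - 1) / 2 * a) = Real.exp ((γ - 1) * a) := by
      rw [← Real.exp_add]; ring_nf
    have e2 : Real.exp (-((γ - 1) / 2 * a)) * Real.exp ((γ - 1) / 2 * a) = 1 := by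
      rw [← Real.exp_add]; simp
    linear_combination (-1 : ℝ) * e + e2
  rw [h1]
  have hS : 0 ≤ Real.sinh ((γ - 1) / 2 * a) := by
    rcases eq_or_lt_of_le (by positivity : (0:ℝ) ≤ (γ - 1) / 2 * a) with h | h
    · simp [← h]
    · exact (sinh_pos' h).le
  have hsqγ : Real.sqrt γ ^ 2 = γ := Real.sq_sqrt (by linarith)
  have hkS : kappa γ * Real.sinh ((γ - 1) / 2 * a) ≤ Real.sqrt (Pf γ a) := by
    apply Real.le_sqrt_of_sq_le
    have hk := key_sinh hγ ha0
    unfold kappa Pf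
    rw [mul_pow, div_pow, hsqγ, div_mul_eq_mul_div, div_le_iff₀ (by positivity)]
    nlinarith [hk]
  have hEp : (0:ℝ) < Real.exp ((γ - 1) / 2 * a) := Real.exp_pos _
  unfold Phif Qf
  nlinarith [hkS, hEp, hS, kappa_pos_aux hγ]


lemma phiB_of_le {γ x : ℝ} (hx : x ≤ 1) : phiB γ x = kappa γ * (x - 1) := if_pos hx

lemma phiB_of_gt {γ x : ℝ} (hx : 1 < x) : phiB γ x = shockPart γ x := if_neg (not_le.2 hx)

lemma shockPart_one (γ : ℝ) : shockPart γ 1 = 0 := by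
  unfold shockPart; simp [Real.one_rpow]

lemma phiB_one (γ : ℝ) : phiB γ 1 = 0 := by
  rw [phiB_of_le le_rfl]; ring

lemma shockPart_nonneg (γ x : ℝ) : 0 ≤ shockPart γ x := Real.sqrt_nonneg _

lemma shockPart_pos {γ : ℝ} (hγ : 1 < γ) {x : ℝ} (hx : 1 < x) : 0 < shockPart γ x := by
  unfold shockPart
  rw [Real.sqrt_pos]
  apply mul_pos
  · have : x ^ (-(1:ℝ) / ((γ - 1) / 2)) < 1 :=
      Real.rpow_lt_one_of_one_lt_of_neg hx (by
        apply div_neg_of_neg_of_pos <;> [norm_num; linarith])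
    linarith
  · have : 1 < x ^ (γ / ((γ - 1) / 2)) :=
      (Real.one_lt_rpow_iff_of_pos (by linarith)).2
        (Or.inl ⟨hx, by apply div_pos <;> linarith⟩)
    linarith

lemma phiB_ge {γ : ℝ} (hγ : 1 < γ) {x : ℝ} (hx : 0 < x) :
    kappa γ * (x - 1) ≤ phiB γ x := by
  rcases le_or_gt x 1 with h | h
  · rw [phiB_of_le h]
  · rw [phiB_of_gt h]
    exact kappa_le_shock hγ h.le

lemma phiB_strictMono {γ : ℝ} (hγ : 1 < γ) {u w : ℝ} (hu : 0 < u) (huw : u < w) :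
    phiB γ u < phiB γ w := by
  have hκ := kappa_pos_aux hγ
  rcases le_or_gt w 1 with hw | hw
  · rw [phiB_of_le (le_trans huw.le hw), phiB_of_le hw]
    nlinarith
  · rw [phiB_of_gt hw]
    rcases le_or_gt u 1 with hu1 | hu1
    · rw [phiB_of_le hu1]
      have h1 : kappa γ * (u - 1) ≤ 0 := by nlinarith
      linarith [shockPart_pos hγ hw]
    · rw [phiB_of_gt hu1]
      unfold shockPart
      have hα : (0:ℝ) < (γ - 1) / 2 := by linarith
      have hexp1 : (-(1:ℝ) / ((γ - 1) / 2)) < 0 :=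
        div_neg_of_neg_of_pos (by norm_num) hα
      have hexp2 : (0:ℝ) < γ / ((γ - 1) / 2) := div_pos (by linarith) hα
      apply Real.sqrt_lt_sqrt
      · apply mul_nonneg
        · have : u ^ (-(1:ℝ) / ((γ - 1) / 2)) ≤ 1 :=
            Real.rpow_le_one_of_one_le_of_nonpos hu1.le hexp1.le
          linarith
        · have : 1 ≤ u ^ (γ / ((γ - 1) / 2)) := Real.one_le_rpow hu1.le hexp2.le
          linarith
      · apply mul_lt_mul''
        · have : w ^ (-(1:ℝ) / ((γ - 1) / 2)) < u ^ (-(1:ℝ) / ((γ - 1) / 2)) := by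
            rw [show (-(1:ℝ) / ((γ - 1) / 2)) = -(1 / ((γ - 1) / 2)) by ring,
              Real.rpow_neg (by linarith : (0:ℝ) ≤ u), Real.rpow_neg (by linarith : (0:ℝ) ≤ w)]
            have h1 : u ^ ((1:ℝ) / ((γ - 1) / 2)) < w ^ ((1:ℝ) / ((γ - 1) / 2)) :=
              Real.rpow_lt_rpow (by linarith) huw (by positivity)
            have h2 : (0:ℝ) < u ^ ((1:ℝ) / ((γ - 1) / 2)) :=
              Real.rpow_pos_of_pos (by linarith) _
            exact inv_strictAnti₀ h2 h1
          linarith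
        · have : u ^ (γ / ((γ - 1) / 2)) < w ^ (γ / ((γ - 1) / 2)) :=
            Real.rpow_lt_rpow (by linarith) huw hexp2
          linarith
        · have : u ^ (-(1:ℝ) / ((γ - 1) / 2)) ≤ 1 :=
            Real.rpow_le_one_of_one_le_of_nonpos hu1.le hexp1.le
          linarith
        · have : 1 ≤ u ^ (γ / ((γ - 1) / 2)) := Real.one_le_rpow hu1.le hexp2.le
          linarith

lemma phiB_continuous {γ : ℝ} (hγ : 1 < γ) : Continuous (phiB γ) := by
  have hrep : phiB γ = fun x => kappa γ * (min x 1 - 1) + shockPart γ (max x 1) := by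
    funext x
    rcases le_or_gt x 1 with h | h
    · rw [phiB_of_le h, min_eq_left h, max_eq_right h, shockPart_one]; ring
    · rw [phiB_of_gt h, min_eq_right h.le, max_eq_left h.le]; simp
  rw [hrep]
  apply Continuous.add
  · exact continuous_const.mul ((continuous_id.min continuous_const).sub continuous_const)
  · have hmaxc : Continuous (fun x : ℝ => max x 1) := continuous_id.max continuous_const
    rw [continuous_iff_continuousAt]
    intro x
    have hne : max x 1 ≠ 0 := by
      have : (1:ℝ) ≤ max x 1 := le_max_right _ _
      linarith
    have c1 : ContinuousAt (fun y : ℝ => y ^ (-(1:ℝ) / ((γ - 1) / 2))) (max x 1) :=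
      Real.continuousAt_rpow_const _ _ (Or.inl hne)
    have c2 : ContinuousAt (fun y : ℝ => y ^ (γ / ((γ - 1) / 2))) (max x 1) :=
      Real.continuousAt_rpow_const _ _ (Or.inl hne)
    have cmax : ContinuousAt (fun x : ℝ => max x 1) x := hmaxc.continuousAt
    have d1 : ContinuousAt (fun x : ℝ => (max x 1) ^ (-(1:ℝ) / ((γ - 1) / 2))) x :=
      ContinuousAt.comp (f := fun x : ℝ => max x 1) c1 cmax
    have d2 : ContinuousAt (fun x : ℝ => (max x 1) ^ (γ / ((γ - 1) / 2))) x :=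
      ContinuousAt.comp (f := fun x : ℝ => max x 1) c2 cmax
    exact Real.continuous_sqrt.continuousAt.comp
      ((continuousAt_const.sub d1).mul (d2.sub continuousAt_const))

lemma G_strictMono {γ : ℝ} (hγ : 1 < γ) {x y u w : ℝ} (hx : 0 < x) (hy : 0 < y)
    (hu : 0 < u) (huw : u < w) :
    phiB γ u + x * y * phiB γ (u / (x * y)) < phiB γ w + x * y * phiB γ (w / (x * y)) := by
  have hxy : 0 < x * y := mul_pos hx hy
  have h1 := phiB_strictMono hγ hu huw
  have h2 := phiB_strictMono hγ (div_pos hu hxy) ((div_lt_div_iff_of_pos_right hxy).2 huw)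
  nlinarith [mul_lt_mul_of_pos_left h2 hxy]

lemma shock_superadd {γ : ℝ} (hγ : 1 < γ) {x y : ℝ} (hx : 1 < x) (hy : 1 < y) :
    shockPart γ x + x * shockPart γ y < shockPart γ (x * y) := by
  have hγ1 : (0:ℝ) < γ - 1 := by linarith
  set a := Real.log x / (γ - 1) with hadef
  set b := Real.log y / (γ - 1) with hbdef
  have ha : 0 < a := div_pos (Real.log_pos hx) hγ1
  have hb : 0 < b := div_pos (Real.log_pos hy) hγ1
  have hxa : x = Real.exp ((γ - 1) * a) := by
    rw [hadef, mul_div_cancel₀ _ hγ1.ne', Real.exp_log (by linarith)]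
  have hyb : y = Real.exp ((γ - 1) * b) := by
    rw [hbdef, mul_div_cancel₀ _ hγ1.ne', Real.exp_log (by linarith)]
  have hxyab : x * y = Real.exp ((γ - 1) * (a + b)) := by
    rw [hxa, hyb, ← Real.exp_add]; ring_nf
  have key := superadd hγ ha hb
  rw [← shockPart_eq_Phif hγ ha.le, ← shockPart_eq_Phif hγ hb.le,
    ← shockPart_eq_Phif hγ (by positivity : (0:ℝ) ≤ a + b)] at key
  rw [hxa, hyb, ← Real.exp_add,
    show (γ - 1) * a + (γ - 1) * b = (γ - 1) * (a + b) by ring]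
  exact key

end OvertakeAux

/-- the overtaking-interaction equation is uniquely solvable for all
    x, y > 0; and for two overtaking backward shocks (x, y > 1) the outgoing
    backward wave is a shock and the outgoing forward wave a rarefaction
    (1 < B < xy). -/
theorem overtaking_solvable_SS (γ : ℝ) (hγ : 1 < γ) :
    (∀ x y : ℝ, 0 < x → 0 < y →
      ∃! B : ℝ, 0 < B ∧
        phiB γ B + x * y * phiB γ (B / (x * y)) = phiB γ x + x * phiB γ y) ∧
    (∀ x y B : ℝ, 1 < x → 1 < y → 0 < B →
      phiB γ B + x * y * phiB γ (B / (x * y)) = phiB γ x + x * phiB γ y →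
      1 < B ∧ B < x * y) := by
  have hκ := OvertakeAux.kappa_pos_aux hγ
  constructor
  · intro x y hx hy
    have hxy : 0 < x * y := mul_pos hx hy
    set R := phiB γ x + x * phiB γ y with hRdef
    have hRlow : kappa γ * (x * y - 1) ≤ R := by
      have b1 := OvertakeAux.phiB_ge hγ hx
      have b2 := mul_le_mul_of_nonneg_left (OvertakeAux.phiB_ge hγ hy) hx.le
      rw [hRdef]; nlinarith [b1, b2]
    have hmin0 : 0 < min 1 (x * y) := lt_min one_pos hxy
    set lo := min 1 (x * y) / 2 with hlodef
    have hlo0 : 0 < lo := half_pos hmin0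
    have hlo1 : lo ≤ 1 := by
      have h1 := min_le_left 1 (x * y); rw [hlodef]; linarith
    have hloxy : lo ≤ x * y := by
      have h1 := min_le_right 1 (x * y); rw [hlodef]; linarith
    set hi := max 1 ((R / kappa γ + 1 + x * y) / 2 + 1) with hhidef
    have hhi1 : 1 ≤ hi := le_max_left _ _
    have hhi2 : (R / kappa γ + 1 + x * y) / 2 + 1 ≤ hi := le_max_right _ _
    have hhi0 : 0 < hi := lt_of_lt_of_le one_pos hhi1
    have hlohi : lo ≤ hi := le_trans hlo1 hhi1
    have Gcont : Continuous (fun B => phiB γ B + x * y * phiB γ (B / (x * y))) :=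
      (OvertakeAux.phiB_continuous hγ).add
        (continuous_const.mul ((OvertakeAux.phiB_continuous hγ).comp (continuous_id.div_const _)))
    have hGlo : phiB γ lo + x * y * phiB γ (lo / (x * y)) ≤ R := by
      have hdiv : lo / (x * y) ≤ 1 := (div_le_one hxy).2 hloxy
      rw [OvertakeAux.phiB_of_le hlo1, OvertakeAux.phiB_of_le hdiv]
      have e : x * y * (kappa γ * (lo / (x * y) - 1)) = kappa γ * (lo - x * y) := by
        field_simp
        try ring
      rw [e]
      nlinarith [hRlow, hκ, hloxy]
    have hGhi : R ≤ phiB γ hi + x * y * phiB γ (hi / (x * y)) := by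
      have b1 := OvertakeAux.phiB_ge hγ hhi0
      have b2 := mul_le_mul_of_nonneg_left (OvertakeAux.phiB_ge hγ (div_pos hhi0 hxy)) hxy.le
      have e : x * y * (kappa γ * (hi / (x * y) - 1)) = kappa γ * (hi - x * y) := by
        field_simp
        try ring
      have hRk : R ≤ kappa γ * (2 * hi - 1 - x * y) := by
        have h1 : R / kappa γ ≤ 2 * hi - 1 - x * y := by linarith
        calc R = kappa γ * (R / kappa γ) := by field_simp
          _ ≤ kappa γ * (2 * hi - 1 - x * y) := mul_le_mul_of_nonneg_left h1 hκ.le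
      nlinarith [b1, b2, e, hRk]
    obtain ⟨B, hBmem, hGB0⟩ :=
      intermediate_value_Icc hlohi Gcont.continuousOn ⟨hGlo, hGhi⟩
    have hGB : phiB γ B + x * y * phiB γ (B / (x * y)) = R := hGB0
    refine ⟨B, ⟨lt_of_lt_of_le hlo0 hBmem.1, hGB⟩, ?_⟩
    rintro B' ⟨hB', hGB'⟩
    rcases lt_trichotomy B' B with h | h | h
    · exfalso
      have := OvertakeAux.G_strictMono hγ hx hy hB' h
      rw [hGB', hGB] at this
      exact lt_irrefl _ this
    · exact h
    · exfalso
      have := OvertakeAux.G_strictMono hγ hx hy (lt_of_lt_of_le hlo0 hBmem.1) h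
      rw [hGB', hGB] at this
      exact lt_irrefl _ this
  · intro x y B hx hy hB heq
    have hxy1 : 1 < x * y := by nlinarith
    have hxy : 0 < x * y := by linarith
    have hR0 : 0 ≤ phiB γ x + x * phiB γ y := by
      rw [OvertakeAux.phiB_of_gt hx, OvertakeAux.phiB_of_gt hy]
      exact add_nonneg (OvertakeAux.shockPart_nonneg γ x)
        (mul_nonneg (by linarith) (OvertakeAux.shockPart_nonneg γ y))
    constructor
    · by_contra h
      push_neg at h
      have hG1 : phiB γ B + x * y * phiB γ (B / (x * y))
          ≤ phiB γ 1 + x * y * phiB γ (1 / (x * y)) := by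
        rcases lt_or_eq_of_le h with h' | h'
        · exact (OvertakeAux.G_strictMono hγ (by linarith) (by linarith) hB h').le
        · rw [h']
      have hcomp : phiB γ 1 + x * y * phiB γ (1 / (x * y)) = kappa γ * (1 - x * y) := by
        rw [OvertakeAux.phiB_one, OvertakeAux.phiB_of_le ((div_le_one hxy).2 (by linarith))]
        field_simp
        try ring
      rw [heq, hcomp] at hG1
      nlinarith [hR0, hκ, hxy1]
    · by_contra h
      push_neg at h
      have hGxy : phiB γ (x * y) + x * y * phiB γ (x * y / (x * y))
          ≤ phiB γ B + x * y * phiB γ (B / (x * y)) := by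
        rcases lt_or_eq_of_le h with h' | h'
        · exact (OvertakeAux.G_strictMono hγ (by linarith) (by linarith) hxy h').le
        · rw [h']
      have hcomp : phiB γ (x * y) + x * y * phiB γ (x * y / (x * y)) = shockPart γ (x * y) := by
        rw [div_self hxy.ne', OvertakeAux.phiB_one, OvertakeAux.phiB_of_gt hxy1]
        ring
      rw [heq, hcomp] at hGxy
      have hsup := OvertakeAux.shock_superadd hγ hx hy
      have hval : phiB γ x + x * phiB γ y = shockPart γ x + x * shockPart γ y := by
        rw [OvertakeAux.phiB_of_gt hx, OvertakeAux.phiB_of_gt hy]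
      linarith
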